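/- Let μ₁, μ₂ ∈ ℝ_+^n be mean vectors and let p(·|μ) denote the law of a vector of n independent Poisson random variables with mean vector μ (the product of Poisson distributions with means μ_i). If there exists c > 0 such that every coordinate of μ₂ satisfies (μ₂)_i ≥ c, then the Kullback–Leibler divergence satisfies KL(p(·|μ₁) ‖ p(·|μ₂)) ≤ (1/c)·‖μ₁ − μ₂‖₂². -/

import Mathlib

open scoped BigOperators ENNReal NNReal
open MeasureTheory ProbabilityTheory

/-- The law of a vector of `n` independent Poisson random variables with mean vector `μ`
(the product of Poisson distributions with means `μ i`). -/
noncomputable def poissonVecMeasure {n : ℕ} (μ : Fin n → ℝ) : Measure (Fin n → ℕ) :=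
  Measure.pi fun i => poissonMeasure (μ i).toNNReal

/-- Kullback–Leibler divergence between two probability distributions on the countable
space `Fin n → ℕ`. -/
noncomputable def klDivCount {n : ℕ} (P Q : Measure (Fin n → ℕ)) : ℝ :=
  ∑' y : Fin n → ℕ, (P {y}).toReal * Real.log ((P {y}).toReal / (Q {y}).toReal)

namespace KLPoissonAux

lemma poisson_single (r : ℝ≥0) (k : ℕ) :
    poissonMeasure r {k} = ENNReal.ofReal (poissonPMFReal r k) := by
  rw [poissonMeasure_singleton]; rfl

lemma vec_single {n : ℕ} (μ : Fin n → ℝ) (y : Fin n → ℕ) :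
    poissonVecMeasure μ {y} = ∏ i, ENNReal.ofReal (poissonPMFReal (μ i).toNNReal (y i)) := by
  rw [poissonVecMeasure, ← Set.univ_pi_singleton y, Measure.pi_pi]
  simp [poisson_single]

lemma vec_single_toReal {n : ℕ} (μ : Fin n → ℝ) (y : Fin n → ℕ) :
    (poissonVecMeasure μ {y}).toReal = ∏ i, poissonPMFReal (μ i).toNNReal (y i) := by
  rw [vec_single, ENNReal.toReal_prod]
  exact Finset.prod_congr rfl fun i _ => ENNReal.toReal_ofReal poissonPMFReal_nonneg

lemma map_eval {n : ℕ} (μ : Fin n → ℝ) (i : Fin n) :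
    (poissonVecMeasure μ).map (Function.eval i) = poissonMeasure (μ i).toNNReal := by
  ext s hs
  rw [Measure.map_apply (measurable_pi_apply i) hs, poissonVecMeasure,
    Set.eval_preimage, Measure.pi_pi]
  calc (∏ j, poissonMeasure (μ j).toNNReal (Function.update (fun _ => (Set.univ : Set ℕ)) i s j))
      = poissonMeasure (μ i).toNNReal (Function.update (fun _ => (Set.univ : Set ℕ)) i s i) := by
        refine Finset.prod_eq_single i (fun j _ hj => ?_) (fun h => absurd (Finset.mem_univ i) h)
        rw [Function.update_of_ne hj]; exact measure_univ
    _ = poissonMeasure (μ i).toNNReal s := by rw [Function.update_self]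

lemma poisson_hasSum_mul (r : ℝ≥0) :
    HasSum (fun k : ℕ => poissonPMFReal r k * k) r := by
  have hshift : (fun k : ℕ => poissonPMFReal r (k + 1) * (k + 1 : ℕ))
      = fun k : ℕ => (r : ℝ) * poissonPMFReal r k := by
    funext k
    have hk : ((k : ℝ) + 1) ≠ 0 := by positivity
    have hf : ((Nat.factorial k : ℕ) : ℝ) ≠ 0 := Nat.cast_ne_zero.mpr k.factorial_ne_zero
    simp only [poissonPMFReal, Nat.factorial_succ, pow_succ]
    push_cast
    field_simp
  have h1 : HasSum (fun k : ℕ => poissonPMFReal r (k + 1) * (k + 1 : ℕ)) r := by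
    rw [hshift]
    simpa [poissonPMFReal] using (poissonPMFRealSum r).mul_left (r : ℝ)
  have h2 := (hasSum_nat_add_iff (f := fun k : ℕ => poissonPMFReal r k * k) 1).mp h1
  simpa using h2

lemma integrable_id_poisson (r : ℝ≥0) :
    Integrable (fun k : ℕ => (k : ℝ)) (poissonMeasure r) := by
  refine ⟨measurable_from_top.aestronglyMeasurable, ?_⟩
  rw [HasFiniteIntegral, lintegral_countable']
  have heq : ∀ k : ℕ, ‖(k : ℝ)‖ₑ * poissonMeasure r {k}
      = ENNReal.ofReal (poissonPMFReal r k * k) := by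
    intro k
    rw [poissonMeasure_singleton]
    show ‖(k : ℝ)‖ₑ * ENNReal.ofReal (poissonPMFReal r k) = _
    rw [Real.enorm_eq_ofReal (Nat.cast_nonneg k),
      ← ENNReal.ofReal_mul (Nat.cast_nonneg k), mul_comm]
  rw [tsum_congr heq, ← ENNReal.ofReal_tsum_of_nonneg
    (fun k => mul_nonneg poissonPMFReal_nonneg (Nat.cast_nonneg k)) (poisson_hasSum_mul r).summable]
  exact ENNReal.ofReal_lt_top

lemma integral_id_poisson (r : ℝ≥0) :
    ∫ k, (k : ℝ) ∂(poissonMeasure r) = r := by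
  rw [integral_poissonMeasure]
  have heq : ∀ k : ℕ, (Real.exp (-(r : ℝ)) * (r : ℝ) ^ k / (k.factorial : ℝ)) • (k : ℝ)
      = poissonPMFReal r k * k := fun k => rfl
  rw [tsum_congr heq, (poisson_hasSum_mul r).tsum_eq]

noncomputable def gfun (a b : ℝ) (k : ℕ) : ℝ := (b - a) + k * Real.log (a / b)

lemma log_ratio {a b : ℝ} (ha : 0 ≤ a) (hb : 0 < b) (k : ℕ)
    (hk : poissonPMFReal a.toNNReal k ≠ 0) :
    Real.log (poissonPMFReal a.toNNReal k) - Real.log (poissonPMFReal b.toNNReal k)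
      = gfun a b k := by
  have hca : ((a.toNNReal : ℝ)) = a := Real.coe_toNNReal a ha
  have hcb : ((b.toNNReal : ℝ)) = b := Real.coe_toNNReal b hb.le
  have hf : ((Nat.factorial k : ℕ) : ℝ) ≠ 0 := Nat.cast_ne_zero.mpr k.factorial_ne_zero
  have hlogb : Real.log (poissonPMFReal b.toNNReal k)
      = -b + k * Real.log b - Real.log (Nat.factorial k) := by
    rw [poissonPMFReal, hcb, Real.log_div (by positivity) hf,
      Real.log_mul (Real.exp_ne_zero _) (by positivity), Real.log_exp, Real.log_pow]
  rcases eq_or_lt_of_le ha with h0 | hpos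
  · have ha0 : a = 0 := h0.symm
    have hk0 : k = 0 := by
      by_contra hkk
      apply hk
      rw [poissonPMFReal, hca, ha0, zero_pow hkk]
      simp
    subst hk0
    rw [poissonPMFReal, hca, ha0]
    simp [gfun, hlogb, ha0]
  · have hloga : Real.log (poissonPMFReal a.toNNReal k)
        = -a + k * Real.log a - Real.log (Nat.factorial k) := by
      rw [poissonPMFReal, hca, Real.log_div (by positivity) hf,
        Real.log_mul (Real.exp_ne_zero _) (by positivity), Real.log_exp, Real.log_pow]
    rw [hloga, hlogb, gfun, Real.log_div (ne_of_gt hpos) (ne_of_gt hb)]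
    ring

lemma kl1_le {a b c : ℝ} (ha : 0 ≤ a) (hc : 0 < c) (hb : c ≤ b) :
    (b - a) + a * Real.log (a / b) ≤ (a - b) ^ 2 / c := by
  have hb0 : 0 < b := lt_of_lt_of_le hc hb
  have step1 : (b - a) + a * Real.log (a / b) ≤ (a - b) ^ 2 / b := by
    rcases eq_or_lt_of_le ha with h0 | hpos
    · rw [← h0]
      simp only [zero_sub, sub_zero, zero_mul, add_zero]
      rw [neg_sq]
      rw [sq, mul_div_assoc, div_self (ne_of_gt hb0), mul_one]
    · have hlog : Real.log (a / b) ≤ a / b - 1 :=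
        Real.log_le_sub_one_of_pos (by positivity)
      have hmul : a * Real.log (a / b) ≤ a * (a / b - 1) :=
        mul_le_mul_of_nonneg_left hlog ha
      have h2 : (b - a) + a * (a / b - 1) = (a - b) ^ 2 / b := by
        field_simp
        ring
      linarith
  have step2 : (a - b) ^ 2 / b ≤ (a - b) ^ 2 / c :=
    div_le_div_of_nonneg_left (sq_nonneg _) hc hb
  linarith

lemma integral_gfun (a b : ℝ) (ha : 0 ≤ a) :
    ∫ k, gfun a b k ∂(poissonMeasure a.toNNReal)
      = (b - a) + a * Real.log (a / b) := by
  have hint : Integrable (fun k : ℕ => (k : ℝ) * Real.log (a / b))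
      (poissonMeasure a.toNNReal) := (integrable_id_poisson _).mul_const _
  rw [show gfun a b = fun k : ℕ => (b - a) + (k : ℝ) * Real.log (a / b) from rfl,
    integral_add (integrable_const _) hint, integral_const, integral_mul_const,
    integral_id_poisson, Real.coe_toNNReal a ha]
  simp

end KLPoissonAux

open KLPoissonAux in
/-- If every coordinate of `μ₂` is at least `c > 0`, then
`KL(p(·|μ₁) ‖ p(·|μ₂)) ≤ (1/c) ‖μ₁ − μ₂‖₂²`. -/
theorem kl_poisson_le_sq_l2
    (n : ℕ) (μ₁ μ₂ : Fin n → ℝ) (hμ₁ : ∀ i, 0 ≤ μ₁ i)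
    (c : ℝ) (hc : 0 < c) (hμ₂ : ∀ i, c ≤ μ₂ i) :
    klDivCount (poissonVecMeasure μ₁) (poissonVecMeasure μ₂) ≤
      (1 / c) * ∑ i, (μ₁ i - μ₂ i) ^ 2 := by
  set P := poissonVecMeasure μ₁ with hP
  set Q := poissonVecMeasure μ₂ with hQ
  have hμ₂pos : ∀ i, 0 < μ₂ i := fun i => lt_of_lt_of_le hc (hμ₂ i)
  set F : (Fin n → ℕ) → ℝ := fun y => ∑ i, gfun (μ₁ i) (μ₂ i) (y i) with hF
  -- integrability of each coordinate term
  have hInt : ∀ i : Fin n, Integrable (fun y : Fin n → ℕ => gfun (μ₁ i) (μ₂ i) (y i)) P := by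
    intro i
    have hm : AEStronglyMeasurable (gfun (μ₁ i) (μ₂ i)) (P.map (Function.eval i)) :=
      measurable_from_top.aestronglyMeasurable
    have := (integrable_map_measure hm (measurable_pi_apply i).aemeasurable).mp ?_
    · exact this
    · rw [hP, map_eval]
      have hid : Integrable (fun k : ℕ => (k : ℝ)) (poissonMeasure (μ₁ i).toNNReal) :=
        integrable_id_poisson _
      have : Integrable (fun k : ℕ => (μ₂ i - μ₁ i) + (k : ℝ) * Real.log (μ₁ i / μ₂ i))
          (poissonMeasure (μ₁ i).toNNReal) :=
        (integrable_const _).add (hid.mul_const _)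
      exact this
  have hFint : Integrable F P := integrable_finset_sum _ fun i _ => hInt i
  -- Step 1: klDivCount = ∑' y, (P {y}).toReal • F y
  have hstep1 : klDivCount P Q = ∑' y : Fin n → ℕ, (P {y}).toReal • F y := by
    refine tsum_congr fun y => ?_
    by_cases h0 : (P {y}).toReal = 0
    · rw [h0]; simp
    · have hprod : (∏ i, poissonPMFReal (μ₁ i).toNNReal (y i)) ≠ 0 := by
        rw [← vec_single_toReal]; exact h0
      have hne : ∀ i ∈ Finset.univ, poissonPMFReal (μ₁ i).toNNReal (y i) ≠ 0 :=
        Finset.prod_ne_zero_iff.mp hprod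
      have hq : ∀ i ∈ Finset.univ, poissonPMFReal (μ₂ i).toNNReal (y i) ≠ 0 := by
        intro i _
        exact ne_of_gt (poissonPMFReal_pos (Real.toNNReal_pos.mpr (hμ₂pos i)))
      have hlog : Real.log ((P {y}).toReal / (Q {y}).toReal) = F y := by
        rw [hP, hQ, vec_single_toReal, vec_single_toReal,
          Real.log_div hprod (Finset.prod_ne_zero_iff.mpr hq),
          Real.log_prod hne, Real.log_prod hq, ← Finset.sum_sub_distrib]
        exact Finset.sum_congr rfl fun i _ =>
          log_ratio (hμ₁ i) (hμ₂pos i) (y i) (hne i (Finset.mem_univ i))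
      rw [hlog, smul_eq_mul]
  rw [hstep1]
  change ∑' y, P.real {y} • F y ≤ _
  rw [← integral_countable' hFint]
  -- Step 2: compute the integral
  have hstep2 : ∫ y, F y ∂P
      = ∑ i, ((μ₂ i - μ₁ i) + μ₁ i * Real.log (μ₁ i / μ₂ i)) := by
    rw [hF, integral_finset_sum _ fun i _ => hInt i]
    refine Finset.sum_congr rfl fun i _ => ?_
    have hm : AEStronglyMeasurable (gfun (μ₁ i) (μ₂ i)) (P.map (Function.eval i)) :=
      measurable_from_top.aestronglyMeasurable
    rw [← integral_map (measurable_pi_apply i).aemeasurable hm, hP, map_eval,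
      integral_gfun _ _ (hμ₁ i)]
  rw [hstep2, Finset.mul_sum]
  refine Finset.sum_le_sum fun i _ => ?_
  have := kl1_le (hμ₁ i) hc (hμ₂ i)
  calc (μ₂ i - μ₁ i) + μ₁ i * Real.log (μ₁ i / μ₂ i) ≤ (μ₁ i - μ₂ i) ^ 2 / c := this
    _ = 1 / c * (μ₁ i - μ₂ i) ^ 2 := by ring
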